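/- arXiv:1310.1611 — 2 statements merged into one kernel-verified Lean document; each statement's English description precedes it below -/
import Mathlib

section
/- Let a : [0,∞) → ℝ be a smooth (C¹ suffices) function satisfying a'(r) + a(r)² ≤ C² for all r ≥ 0, where C > 0 is a constant. Then -C ≤ a(r) ≤ max{a(0), C} for all r ≥ 0. -/
/-- Forward invariance below `-C`: once `a` drops strictly below `-C`,
it stays at or below that value forever. -/
lemma riccati_key_dec (a : ℝ → ℝ) (C : ℝ) (hC : 0 < C)
    (hdiff : ∀ r ≥ (0 : ℝ), DifferentiableAt ℝ a r)
    (hineq : ∀ r ≥ (0 : ℝ), deriv a r + (a r) ^ 2 ≤ C ^ 2) :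
    ∀ s t : ℝ, 0 ≤ s → s ≤ t → a s < -C → a t ≤ a s := by
  intro s t hs hst hsC
  by_contra hcon
  push_neg at hcon
  set m : ℝ := (a s + min (a t) (-C)) / 2 with hm
  have hmin : a s < min (a t) (-C) := lt_min hcon hsC
  have h1 : a s < m := by rw [hm]; linarith
  have h2 : m < min (a t) (-C) := by rw [hm]; linarith
  have hconts : ContinuousOn a (Set.Icc s t) := fun x hx =>
    ((hdiff x (le_trans hs hx.1)).continuousAt).continuousWithinAt
  have hKcl : IsClosed (Set.Icc s t ∩ a ⁻¹' Set.Ici m) :=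
    hconts.preimage_isClosed_of_isClosed isClosed_Icc isClosed_Ici
  have hKne : (Set.Icc s t ∩ a ⁻¹' Set.Ici m).Nonempty :=
    ⟨t, ⟨⟨hst, le_rfl⟩, le_of_lt (lt_of_lt_of_le h2 (min_le_left _ _))⟩⟩
  have hKbd : BddBelow (Set.Icc s t ∩ a ⁻¹' Set.Ici m) :=
    ⟨s, fun x hx => hx.1.1⟩
  set v : ℝ := sInf (Set.Icc s t ∩ a ⁻¹' Set.Ici m) with hv
  have hvmem : v ∈ Set.Icc s t ∩ a ⁻¹' Set.Ici m := hKcl.csInf_mem hKne hKbd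
  have hvs : s ≤ v := hvmem.1.1
  have hvt : v ≤ t := hvmem.1.2
  have hva : m ≤ a v := hvmem.2
  have hsv : s < v := lt_of_le_of_ne hvs (by intro h; rw [← h] at hva; exact absurd hva (not_le.mpr h1))
  -- below v, a < m
  have hbelow : ∀ x ∈ Set.Ico s v, a x < m := by
    intro x hx
    by_contra hxm
    push_neg at hxm
    have : v ≤ x := csInf_le hKbd ⟨⟨hx.1, le_trans (le_of_lt hx.2) hvt⟩, hxm⟩
    exact absurd hx.2 (not_lt.mpr this)
  -- derivative nonpositive on (s, v)
  have hanti : AntitoneOn a (Set.Icc s v) := by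
    apply antitoneOn_of_deriv_nonpos (convex_Icc s v)
    · exact fun x hx => ((hdiff x (le_trans hs hx.1)).continuousAt).continuousWithinAt
    · rw [interior_Icc]
      exact fun x hx => ((hdiff x (le_trans hs (le_of_lt hx.1)))).differentiableWithinAt
    · rw [interior_Icc]
      intro x hx
      have hx0 : (0:ℝ) ≤ x := le_trans hs (le_of_lt hx.1)
      have haxm : a x < m := hbelow x ⟨le_of_lt hx.1, hx.2⟩
      have haxC : a x < -C := lt_of_lt_of_le (haxm.trans h2) (min_le_right _ _)
      have := hineq x hx0
      nlinarith [sq_nonneg (a x + C)]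
  have : a v ≤ a s := hanti ⟨le_rfl, hvs⟩ ⟨hvs, le_rfl⟩ hvs
  linarith

/-- Riccati differential inequality comparison, `C > 0` case:
if `a' + a² ≤ C²` on `[0,∞)` then `-C ≤ a ≤ max (a 0) C` on `[0,∞)`. -/
theorem riccati_ineq_bound (a : ℝ → ℝ) (C : ℝ) (hC : 0 < C)
    (hsmooth : ∀ r ∈ Set.Ici (0 : ℝ), ContDiffAt ℝ 1 a r)
    (hineq : ∀ r ≥ (0 : ℝ), deriv a r + (a r) ^ 2 ≤ C ^ 2) :
    ∀ r ≥ (0 : ℝ), -C ≤ a r ∧ a r ≤ max (a 0) C := by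
  have hdiff : ∀ r ≥ (0 : ℝ), DifferentiableAt ℝ a r := fun r hr =>
    (hsmooth r hr).differentiableAt one_ne_zero
  intro r hr
  constructor
  · -- lower bound
    by_contra hlow
    push_neg at hlow   -- a r < -C
    set δ : ℝ := -(a r) - C with hδ
    have hδpos : 0 < δ := by rw [hδ]; linarith
    set K₀ : ℝ := δ * (2 * C + δ) with hK₀
    have hK₀pos : 0 < K₀ := by positivity
    -- Step 1: a t ≤ a r for t ≥ r
    have step1 : ∀ t ≥ r, a t ≤ a r :=
      fun t ht => riccati_key_dec a C hC hdiff hineq r t hr ht hlow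
    -- Step 2: linear decrease
    have step2 : ∀ t ≥ r, a t ≤ a r - K₀ * (t - r) := by
      intro t ht
      have hanti : AntitoneOn (fun x => a x + K₀ * x) (Set.Icc r t) := by
        apply antitoneOn_of_deriv_nonpos (convex_Icc r t)
        · intro x hx
          have hx0 : (0:ℝ) ≤ x := le_trans hr hx.1
          exact (((hdiff x hx0).continuousAt).add
            ((continuous_const.mul continuous_id).continuousAt)).continuousWithinAt
        · rw [interior_Icc]
          intro x hx
          have hx0 : (0:ℝ) ≤ x := le_trans hr (le_of_lt hx.1)
          exact ((hdiff x hx0).add ((differentiable_const _).mul differentiable_id).differentiableAt).differentiableWithinAt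
        · rw [interior_Icc]
          intro x hx
          have hx0 : (0:ℝ) ≤ x := le_trans hr (le_of_lt hx.1)
          have hd : HasDerivAt (fun y => a y + K₀ * y) (deriv a x + K₀ * 1) x :=
            ((hdiff x hx0).hasDerivAt).add ((hasDerivAt_id x).const_mul K₀)
          rw [hd.deriv]
          have h1 : a x ≤ a r := step1 x (le_of_lt hx.1)
          have h2 := hineq x hx0
          have h3 : a x ≤ -C - δ := by rw [hδ] at *; linarith
          nlinarith [sq_nonneg (a x + C + δ)]
      have := hanti ⟨le_rfl, ht⟩ ⟨ht, le_rfl⟩ ht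
      simp only at this
      linarith
    -- Step 3: find t₁ with a t₁ ≤ -2C
    set t₁ : ℝ := r + max ((a r + 2 * C) / K₀) 0 with ht₁def
    have ht₁r : r ≤ t₁ := by rw [ht₁def]; nlinarith [le_max_right ((a r + 2 * C) / K₀) 0]
    have ht₁ : a t₁ ≤ -2 * C := by
      rcases le_total ((a r + 2 * C) / K₀) 0 with hq | hq
      · have hmax : max ((a r + 2 * C) / K₀) 0 = 0 := max_eq_right hq
        have har : a r + 2 * C ≤ 0 := by
          by_contra hpos
          push_neg at hpos
          have : 0 < (a r + 2 * C) / K₀ := div_pos (by linarith) hK₀pos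
          linarith
        have := step1 t₁ ht₁r
        linarith
      · have hmax : max ((a r + 2 * C) / K₀) 0 = (a r + 2 * C) / K₀ := max_eq_left hq
        have ht₁eq : t₁ = r + (a r + 2 * C) / K₀ := by rw [ht₁def, hmax]
        have h5 := step2 t₁ ht₁r
        have hKq : K₀ * (t₁ - r) = a r + 2 * C := by
          rw [ht₁eq]
          field_simp
          ring
        rw [hKq] at h5
        linarith
    have ht₁0 : (0:ℝ) ≤ t₁ := le_trans hr ht₁r
    -- Step 4: a t ≤ -2C for t ≥ t₁
    have step4 : ∀ t ≥ t₁, a t ≤ -2 * C := by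
      intro t ht
      have h1 : a t₁ < -C := by linarith
      have := riccati_key_dec a C hC hdiff hineq t₁ t ht₁0 ht h1
      linarith
    -- Step 5: the function -(a x)⁻¹ + (3/4) x is antitone on [t₁, t₂]
    set t₂ : ℝ := t₁ + 1 / C with ht₂def
    have hCinv : (0:ℝ) < 1 / C := by positivity
    have ht₂ : t₁ ≤ t₂ := by rw [ht₂def]; linarith
    have hne : ∀ x, t₁ ≤ x → a x ≠ 0 := by
      intro x hx
      have := step4 x hx
      intro h0; rw [h0] at this; linarith
    have hanti : AntitoneOn (fun x => -(a x)⁻¹ + (3/4) * x) (Set.Icc t₁ t₂) := by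
      apply antitoneOn_of_deriv_nonpos (convex_Icc t₁ t₂)
      · intro x hx
        have hx0 : (0:ℝ) ≤ x := le_trans ht₁0 hx.1
        exact ((((hdiff x hx0).inv (hne x hx.1)).neg.add
          ((differentiable_const _).mul differentiable_id).differentiableAt).continuousAt).continuousWithinAt
      · rw [interior_Icc]
        intro x hx
        have hx0 : (0:ℝ) ≤ x := le_trans ht₁0 (le_of_lt hx.1)
        exact (((hdiff x hx0).inv (hne x (le_of_lt hx.1))).neg.add
          ((differentiable_const _).mul differentiable_id).differentiableAt).differentiableWithinAt
      · rw [interior_Icc]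
        intro x hx
        have hx0 : (0:ℝ) ≤ x := le_trans ht₁0 (le_of_lt hx.1)
        have hax : a x ≤ -2 * C := step4 x (le_of_lt hx.1)
        have haxne : a x ≠ 0 := hne x (le_of_lt hx.1)
        have hd : HasDerivAt (fun y => -(a y)⁻¹ + (3/4) * y)
            (-(-(deriv a x) / (a x) ^ 2) + (3/4) * 1) x :=
          (((hdiff x hx0).hasDerivAt).inv haxne).neg.add ((hasDerivAt_id x).const_mul (3/4))
        rw [hd.deriv]
        have hsq : 0 < (a x) ^ 2 := by positivity
        have hkey : deriv a x ≤ -(3/4) * (a x) ^ 2 := by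
          have := hineq x hx0
          nlinarith [sq_nonneg (a x + 2 * C)]
        have : -(-(deriv a x) / (a x) ^ 2) = deriv a x / (a x) ^ 2 := by ring
        rw [this]
        have : deriv a x / (a x) ^ 2 ≤ -(3/4) := by
          rw [div_le_iff₀ hsq]
          linarith [hkey]
        linarith
    have hmono := hanti ⟨le_rfl, ht₂⟩ ⟨ht₂, le_rfl⟩ ht₂
    simp only at hmono
    -- -(a t₂)⁻¹ + (3/4) t₂ ≤ -(a t₁)⁻¹ + (3/4) t₁
    have ha₁ : a t₁ ≤ -2 * C := step4 t₁ le_rfl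
    have ha₂ : a t₂ ≤ -2 * C := step4 t₂ ht₂
    have hb₁ : -(a t₁)⁻¹ ≤ 1 / (2 * C) := by
      have hy : 2 * C ≤ -(a t₁) := by linarith
      have h2 : (-(a t₁))⁻¹ ≤ (2 * C)⁻¹ := inv_anti₀ (by positivity) hy
      rw [inv_neg] at h2
      rw [one_div]
      exact h2
    have hb₂ : 0 < -(a t₂)⁻¹ := by
      have : (a t₂)⁻¹ < 0 := inv_lt_zero.mpr (by linarith)
      linarith
    have ht₂₁ : t₂ - t₁ = 1 / C := by rw [ht₂def]; ring
    have hfin : -(a t₂)⁻¹ ≤ 1 / (2 * C) - (3/4) * (1 / C) := by nlinarith [hmono]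
    have : 1 / (2 * C) - (3/4) * (1 / C) < 0 := by
      have heq : 1 / (2 * C) - (3/4) * (1 / C) = -(1 / (4 * C)) := by
        field_simp
        ring
      rw [heq]
      have : 0 < 1 / (4 * C) := by positivity
      linarith
    linarith
  · -- upper bound
    set M : ℝ := max (a 0) C with hM
    by_contra hup
    push_neg at hup  -- M < a r
    have hCM : C ≤ M := by rw [hM]; exact le_max_right _ _
    have hconts : ContinuousOn a (Set.Icc 0 r) := fun x hx =>
      ((hdiff x hx.1).continuousAt).continuousWithinAt
    have hKcl : IsClosed (Set.Icc 0 r ∩ a ⁻¹' Set.Iic M) :=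
      hconts.preimage_isClosed_of_isClosed isClosed_Icc isClosed_Iic
    have hKne : (Set.Icc 0 r ∩ a ⁻¹' Set.Iic M).Nonempty :=
      ⟨0, ⟨⟨le_rfl, hr⟩, by rw [Set.mem_preimage, Set.mem_Iic, hM]; exact le_max_left _ _⟩⟩
    have hKbd : BddAbove (Set.Icc 0 r ∩ a ⁻¹' Set.Iic M) := ⟨r, fun x hx => hx.1.2⟩
    set u : ℝ := sSup (Set.Icc 0 r ∩ a ⁻¹' Set.Iic M) with hu
    have humem : u ∈ Set.Icc 0 r ∩ a ⁻¹' Set.Iic M := hKcl.csSup_mem hKne hKbd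
    have hu0 : 0 ≤ u := humem.1.1
    have hur : u ≤ r := humem.1.2
    have hua : a u ≤ M := humem.2
    have hur' : u < r := lt_of_le_of_ne hur (by intro h; rw [h] at hua; exact absurd hua (not_le.mpr hup))
    have habove : ∀ x ∈ Set.Ioc u r, M < a x := by
      intro x hx
      by_contra hxm
      push_neg at hxm
      have : x ≤ u := le_csSup hKbd ⟨⟨le_trans hu0 (le_of_lt hx.1), hx.2⟩, hxm⟩
      exact absurd hx.1 (not_lt.mpr this)
    have hanti : AntitoneOn a (Set.Icc u r) := by
      apply antitoneOn_of_deriv_nonpos (convex_Icc u r)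
      · exact fun x hx => ((hdiff x (le_trans hu0 hx.1)).continuousAt).continuousWithinAt
      · rw [interior_Icc]
        exact fun x hx => (hdiff x (le_trans hu0 (le_of_lt hx.1))).differentiableWithinAt
      · rw [interior_Icc]
        intro x hx
        have hx0 : (0:ℝ) ≤ x := le_trans hu0 (le_of_lt hx.1)
        have haxM : M < a x := habove x ⟨hx.1, le_of_lt hx.2⟩
        have haxC : C < a x := lt_of_le_of_lt hCM haxM
        have := hineq x hx0
        nlinarith [sq_nonneg (a x - C)]
    have : a r ≤ a u := hanti ⟨le_rfl, hur⟩ ⟨hur, le_rfl⟩ hur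
    linarith
end

section
/- Let a : [0,∞) → ℝ be a smooth (C¹ suffices) function satisfying a'(r) + a(r)² ≤ 0 for all r ≥ 0. Then 0 ≤ a(r) ≤ a(0) for all r ≥ 0. -/
theorem riccati_aux_antitone (a : ℝ → ℝ)
    (hsmooth : ∀ r ∈ Set.Ici (0 : ℝ), ContDiffAt ℝ 1 a r)
    (hineq : ∀ r ≥ (0 : ℝ), deriv a r + (a r) ^ 2 ≤ 0) :
    AntitoneOn a (Set.Ici 0) := by
  apply antitoneOn_of_deriv_nonpos (convex_Ici 0)
  · exact fun r hr => ((hsmooth r hr).continuousAt).continuousWithinAt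
  · intro r hr
    rw [interior_Ici] at hr
    exact ((hsmooth r (Set.mem_Ici.mpr (le_of_lt hr))).differentiableAt one_ne_zero).differentiableWithinAt
  · intro r hr
    rw [interior_Ici] at hr
    have := hineq r (le_of_lt hr)
    nlinarith [sq_nonneg (a r)]

/-- Riccati differential inequality comparison, `C = 0` case:
if `a' + a² ≤ 0` on `[0,∞)` then `0 ≤ a ≤ a 0` on `[0,∞)`. -/
theorem riccati_ineq_bound_zero (a : ℝ → ℝ)
    (hsmooth : ∀ r ∈ Set.Ici (0 : ℝ), ContDiffAt ℝ 1 a r)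
    (hineq : ∀ r ≥ (0 : ℝ), deriv a r + (a r) ^ 2 ≤ 0) :
    ∀ r ≥ (0 : ℝ), 0 ≤ a r ∧ a r ≤ a 0 := by
  have hanti := riccati_aux_antitone a hsmooth hineq
  intro r hr
  refine ⟨?_, hanti (by simp) hr hr⟩
  by_contra hneg
  push_neg at hneg
  set r₀ := r with hr₀
  -- a is negative on [r₀, ∞)
  have haneg : ∀ s ∈ Set.Ici r₀, a s < 0 := fun s hs =>
    lt_of_le_of_lt (hanti hr (le_trans hr hs) hs) hneg
  -- g = -(a)⁻¹ + id has derivative a'/a² + 1 ≤ 0 on Ici r₀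
  set g : ℝ → ℝ := fun s => -(a s)⁻¹ + s with hg
  have hgderiv : ∀ s ∈ Set.Ici r₀, HasDerivAt g (deriv a s / (a s) ^ 2 + 1) s := by
    intro s hs
    have hda : HasDerivAt a (deriv a s) s :=
      ((hsmooth s (le_trans hr hs)).differentiableAt one_ne_zero).hasDerivAt
    have h1 := (hda.inv (ne_of_lt (haneg s hs))).neg
    have h2 := h1.add (hasDerivAt_id s)
    convert h2 using 1
    · rfl
    · rfl
    · ext x; simp [hg]
    · ring
  have hganti : AntitoneOn g (Set.Ici r₀) := by
    apply antitoneOn_of_deriv_nonpos (convex_Ici r₀)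
    · intro s hs
      exact ((hgderiv s hs).continuousAt).continuousWithinAt
    · intro s hs
      rw [interior_Ici] at hs
      exact (hgderiv s (Set.mem_Ici.mpr (le_of_lt hs))).differentiableAt.differentiableWithinAt
    · intro s hs
      rw [interior_Ici] at hs
      rw [(hgderiv s (Set.mem_Ici.mpr (le_of_lt hs))).deriv]
      have h1 := hineq s (le_trans hr (le_of_lt hs))
      have h2 : (0:ℝ) < (a s) ^ 2 := by nlinarith [haneg s (Set.mem_Ici.mpr (le_of_lt hs))]
      have : deriv a s / (a s) ^ 2 ≤ -1 := by
        rw [div_le_iff₀ h2]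
        nlinarith
      linarith
  set M : ℝ := -(a r₀)⁻¹ with hM
  have hMpos : 0 < M := by
    have h := haneg r₀ Set.self_mem_Ici
    have : (a r₀)⁻¹ < 0 := inv_neg''.mpr h
    simp only [hM]
    linarith
  set r₁ : ℝ := r₀ + M + 1 with hr₁
  have hr₁mem : r₁ ∈ Set.Ici r₀ := by simp [hr₁]; linarith
  have := hganti (Set.self_mem_Ici) hr₁mem (by simp [hr₁]; linarith)
  have hpos : 0 < -(a r₁)⁻¹ := by
    have := haneg r₁ hr₁mem
    exact neg_pos.mpr (inv_neg''.mpr this)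
  simp only [hg] at this
  -- g r₁ ≤ g r₀ : -(a r₁)⁻¹ + r₁ ≤ M + r₀
  have : -(a r₁)⁻¹ + (r₀ + M + 1) ≤ M + r₀ := by
    simpa [hr₁, hM] using this
  linarith
end
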